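/- Let G, H, K be pro-oligomorphic groups, and assume G is split, meaning: for every pro-oligomorphic group H′, every transitive object of S(G × H′) is isomorphic to X × Y for some transitive G-set X and transitive H′-set Y. Let Φ : S(G) → S(K) and Ψ : S(H) → S(K) be exact functors such that Φ(X) × Ψ(Y) is a transitive K-set whenever X ∈ S(G) and Y ∈ S(H) are transitive. Let X be a transitive G-set, Y a transitive H-set, and Z an object of S(K) admitting a surjective morphism Φ(X) × Ψ(Y) → Z. Then there exist a G-set X′ with a surjective morphism X → X′ in S(G), an H-set Y′ with a surjective morphism Y → Y′ in S(H), and an isomorphism Z ≅ Φ(X′) × Ψ(Y′) in S(K). -/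

import Mathlib

open CategoryTheory

/-- A finitary smooth `G`-set for a topological group `G`: a `G`-action such that every
point stabilizer is open and there are finitely many orbits. -/
structure SmGSet (G : Type) [Group G] [TopologicalSpace G] : Type 1 where
  /-- the underlying set -/
  α : Type
  /-- the action -/
  smul : G → α → α
  one_smul : ∀ x, smul 1 x = x
  mul_smul : ∀ g h x, smul (g * h) x = smul g (smul h x)
  /-- smoothness: every point stabilizer is an open subgroup -/
  smooth : ∀ x : α, IsOpen {g : G | smul g x = x}
  /-- finitarity: there are finitely many orbits -/
  finitary : Finite (Quot fun x y : α => ∃ g : G, smul g x = y)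

namespace SmGSet

variable {G : Type} [Group G] [TopologicalSpace G]

/-- Morphisms of `G`-sets: equivariant maps. -/
@[ext]
structure SmHom (X Y : SmGSet G) where
  toFun : X.α → Y.α
  equivariant : ∀ (g : G) (x : X.α), toFun (X.smul g x) = Y.smul g (toFun x)

/-- The category `S(G)` of finitary smooth `G`-sets. -/
instance : Category (SmGSet G) where
  Hom := SmHom
  id X := ⟨fun x => x, fun _ _ => rfl⟩
  comp f g := ⟨fun x => g.toFun (f.toFun x), fun a x => by
    try dsimp only
    rw [f.equivariant, g.equivariant]⟩

/-- A `G`-set is transitive if it is nonempty and has a single orbit. -/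
def IsTransitive (X : SmGSet G) : Prop :=
  Nonempty X.α ∧ ∀ x y : X.α, ∃ g : G, X.smul g x = y

/-- The orbit equivalence relation is an equivalence. -/
theorem orbRel_equiv (X : SmGSet G) :
    Equivalence fun x y : X.α => ∃ g : G, X.smul g x = y := by
  constructor
  · intro x; exact ⟨1, X.one_smul x⟩
  · rintro x y ⟨g, rfl⟩
    exact ⟨g⁻¹, by rw [← X.mul_smul, inv_mul_cancel, X.one_smul]⟩
  · rintro x y z ⟨g, rfl⟩ ⟨h, rfl⟩
    exact ⟨h * g, X.mul_smul h g x⟩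

/-- A finitary `G`-set admits a finite orbit transversal. -/
theorem exists_transversal (X : SmGSet G) :
    ∃ S : Set X.α, S.Finite ∧ ∀ x : X.α, ∃ s ∈ S, ∃ g : G, X.smul g s = x := by
  haveI := X.finitary
  refine ⟨Set.range (fun q : Quot fun x y : X.α => ∃ g : G, X.smul g x = y => q.out),
    Set.finite_range _, fun x => ?_⟩
  refine ⟨(Quot.mk _ x).out, ⟨_, rfl⟩, ?_⟩
  have h : Quot.mk _ (Quot.mk (fun x y : X.α => ∃ g : G, X.smul g x = y) x).out
      = Quot.mk _ x := Quot.out_eq _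
  exact (X.orbRel_equiv.eqvGen_iff).mp (Quot.eq.mp h)

/-- The stabilizer of a point, as a subgroup. -/
def stab (X : SmGSet G) (x : X.α) : Subgroup G where
  carrier := {g | X.smul g x = x}
  one_mem' := X.one_smul x
  mul_mem' := by
    intro a b ha hb
    simp only [Set.mem_setOf_eq] at *
    rw [X.mul_smul, hb, ha]
  inv_mem' := by
    intro a ha
    simp only [Set.mem_setOf_eq] at *
    have h : X.smul a⁻¹ (X.smul a x) = x := by
      rw [← X.mul_smul, inv_mul_cancel, X.one_smul]
    rwa [ha] at h

theorem stab_isOpen (X : SmGSet G) (x : X.α) : IsOpen ((X.stab x : Subgroup G) : Set G) :=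
  X.smooth x

end SmGSet

namespace SmGSet

variable {G : Type} [Group G] [TopologicalSpace G]

/-- The external product of a `G`-set and an `H`-set, as a `(G × H)`-set. -/
def eprod {H : Type} [Group H] [TopologicalSpace H]
    (X : SmGSet G) (Y : SmGSet H) : SmGSet (G × H) where
  α := X.α × Y.α
  smul p q := (X.smul p.1 q.1, Y.smul p.2 q.2)
  one_smul q := by
    have h1 : X.smul 1 q.1 = q.1 := X.one_smul q.1
    have h2 : Y.smul 1 q.2 = q.2 := Y.one_smul q.2
    simp [h1, h2]
  mul_smul p p' q := by
    have h1 : X.smul (p.1 * p'.1) q.1 = X.smul p.1 (X.smul p'.1 q.1) := X.mul_smul _ _ _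
    have h2 : Y.smul (p.2 * p'.2) q.2 = Y.smul p.2 (Y.smul p'.2 q.2) := Y.mul_smul _ _ _
    simp [Prod.mul_def, h1, h2]
  smooth q := by
    have h : {p : G × H | (X.smul p.1 q.1, Y.smul p.2 q.2) = q} =
        {g : G | X.smul g q.1 = q.1} ×ˢ {h : H | Y.smul h q.2 = q.2} := by
      ext p
      simp only [Set.mem_setOf_eq, Set.mem_prod, Prod.ext_iff]
    rw [h]
    exact (X.smooth q.1).prod (Y.smooth q.2)
  finitary := by
    obtain ⟨SX, hSXfin, hSX⟩ := X.exists_transversal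
    obtain ⟨SY, hSYfin, hSY⟩ := Y.exists_transversal
    haveI := hSXfin.to_subtype
    haveI := hSYfin.to_subtype
    refine Finite.of_surjective
      (fun w : SX × SY => Quot.mk _ ((w.1 : X.α), (w.2 : Y.α))) fun z => ?_
    obtain ⟨⟨x, y⟩, rfl⟩ := Quot.exists_rep z
    obtain ⟨s, hs, g, hg⟩ := hSX x
    obtain ⟨t, ht, h, hh⟩ := hSY y
    exact ⟨⟨⟨s, hs⟩, ⟨t, ht⟩⟩, Quot.sound ⟨(g, h), by simp [hg, hh]⟩⟩

/-- The (diagonal) product of two `G`-sets in `S(G)`, for `G` Roelcke precompact.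
This is the categorical product in `S(G)`, computed on underlying sets. -/
noncomputable def dprod (X Y : SmGSet G)
    (hroelcke : ∀ U V : Subgroup G, IsOpen (U : Set G) → IsOpen (V : Set G) →
      Finite (DoubleCoset.Quotient (U : Set G) (V : Set G))) : SmGSet G where
  α := X.α × Y.α
  smul g p := (X.smul g p.1, Y.smul g p.2)
  one_smul p := by
    have h1 : X.smul 1 p.1 = p.1 := X.one_smul p.1
    have h2 : Y.smul 1 p.2 = p.2 := Y.one_smul p.2
    simp [h1, h2]
  mul_smul g h p := by
    have h1 : X.smul (g * h) p.1 = X.smul g (X.smul h p.1) := X.mul_smul _ _ _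
    have h2 : Y.smul (g * h) p.2 = Y.smul g (Y.smul h p.2) := Y.mul_smul _ _ _
    simp [h1, h2]
  smooth p := by
    have h : {g : G | (X.smul g p.1, Y.smul g p.2) = p} =
        {g : G | X.smul g p.1 = p.1} ∩ {g : G | Y.smul g p.2 = p.2} := by
      ext g
      simp only [Set.mem_setOf_eq, Set.mem_inter_iff, Prod.ext_iff]
    rw [h]
    exact (X.smooth p.1).inter (Y.smooth p.2)
  finitary := by
    obtain ⟨SX, hSXfin, hSX⟩ := X.exists_transversal
    obtain ⟨SY, hSYfin, hSY⟩ := Y.exists_transversal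
    haveI := hSXfin.to_subtype
    haveI := hSYfin.to_subtype
    haveI : ∀ (s : SX) (t : SY),
        Finite (DoubleCoset.Quotient ((X.stab (s : X.α) : Subgroup G) : Set G)
          ((Y.stab (t : Y.α) : Subgroup G) : Set G)) :=
      fun s t => hroelcke _ _ (X.stab_isOpen _) (Y.stab_isOpen _)
    refine Finite.of_surjective
      (fun w : Σ (s : SX) (t : SY),
          DoubleCoset.Quotient ((X.stab (s : X.α) : Subgroup G) : Set G)
            ((Y.stab (t : Y.α) : Subgroup G) : Set G) =>
        Quot.mk _ ((w.1 : X.α), Y.smul w.2.2.out (w.2.1 : Y.α))) fun z => ?_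
    obtain ⟨⟨x, y⟩, rfl⟩ := Quot.exists_rep z
    obtain ⟨s, hs, g, hgx⟩ := hSX x
    obtain ⟨t, ht, h, hhy⟩ := hSY (Y.smul g⁻¹ y)
    refine ⟨⟨⟨s, hs⟩, ⟨t, ht⟩, DoubleCoset.mk (X.stab s) (Y.stab t) h⟩, ?_⟩
    set r := (DoubleCoset.mk (X.stab s) (Y.stab t) h).out with hr
    have hout : DoubleCoset.mk (X.stab s) (Y.stab t) r = DoubleCoset.mk (X.stab s) (Y.stab t) h := by
      rw [hr]; exact Quotient.out_eq' _
    obtain ⟨u, hu, v, hv, huv⟩ := DoubleCoset.rel_iff.mp (Quotient.eq''.mp hout)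
    have hu' : X.smul u s = s := hu
    have hv' : Y.smul v t = t := hv
    have hxs : X.smul (g * u) s = x := by
      rw [X.mul_smul, hu', hgx]
    have hys : Y.smul (g * u) (Y.smul r t) = y := by
      have hassoc : g * u * r * v = g * h := by rw [huv]; group
      calc Y.smul (g * u) (Y.smul r t)
          = Y.smul (g * u * r) t := (Y.mul_smul (g * u) r t).symm
        _ = Y.smul (g * u * r) (Y.smul v t) := by rw [hv']
        _ = Y.smul (g * u * r * v) t := (Y.mul_smul (g * u * r) v t).symm
        _ = Y.smul (g * h) t := by rw [hassoc]
        _ = Y.smul g (Y.smul h t) := Y.mul_smul g h t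
        _ = Y.smul g (Y.smul g⁻¹ y) := by rw [hhy]
        _ = y := by rw [← Y.mul_smul, mul_inv_cancel, Y.one_smul]
    exact Quot.sound ⟨g * u, by dsimp only; rw [hxs, hys]⟩

end SmGSet

/-- A topological group is pro-oligomorphic if it is Hausdorff, non-archimedean (open
subgroups form a neighborhood basis of the identity), and Roelcke precompact (`U\G/V`
is finite for all open subgroups `U`, `V`). -/
structure IsProOligomorphic (G : Type) [Group G] [TopologicalSpace G]
    [IsTopologicalGroup G] : Prop where
  t2 : T2Space G
  nonarch : ∀ s ∈ nhds (1 : G), ∃ U : Subgroup G, IsOpen (U : Set G) ∧ (U : Set G) ⊆ s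
  roelcke : ∀ U V : Subgroup G, IsOpen (U : Set G) → IsOpen (V : Set G) →
    Finite (DoubleCoset.Quotient (U : Set G) (V : Set G))

namespace SmGSet

/-- Roelcke precompactness hypothesis shape used by `dprod`. -/
abbrev Roelcke (G : Type) [Group G] [TopologicalSpace G] : Prop :=
  ∀ U V : Subgroup G, IsOpen (U : Set G) → IsOpen (V : Set G) →
    Finite (DoubleCoset.Quotient (U : Set G) (V : Set G))

variable {G : Type} [Group G] [TopologicalSpace G]

theorem smul_cancel (M : SmGSet G) (g : G) (x : M.α) : M.smul g⁻¹ (M.smul g x) = x := by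
  rw [← M.mul_smul, inv_mul_cancel, M.one_smul]

theorem toFun_comp {A B C : SmGSet G} (f : A ⟶ B) (g : B ⟶ C) (x : A.α) :
    (f ≫ g).toFun x = g.toFun (f.toFun x) := rfl

theorem toFun_congr {A B : SmGSet G} {f g : A ⟶ B} (h : f = g) (x : A.α) :
    f.toFun x = g.toFun x := by rw [h]

theorem map_comp_toFun {K : Type} [Group K] [TopologicalSpace K] (T : SmGSet G ⥤ SmGSet K)
    {A B C : SmGSet G} (f : A ⟶ B) (g : B ⟶ C) (x : (T.obj A).α) :
    (T.map (f ≫ g)).toFun x = (T.map g).toFun ((T.map f).toFun x) := by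
  rw [T.map_comp]; rfl

theorem map_id_toFun {K : Type} [Group K] [TopologicalSpace K] (T : SmGSet G ⥤ SmGSet K)
    (A : SmGSet G) (x : (T.obj A).α) : (T.map (𝟙 A)).toFun x = x := by
  rw [T.map_id]; rfl

theorem pair_fst_eq {α β : Type _} {a c : α} {b d : β} (h : (a, b) = (c, d)) : a = c :=
  congrArg Prod.fst h

theorem pair_snd_eq {α β : Type _} {a c : α} {b d : β} (h : (a, b) = (c, d)) : b = d :=
  congrArg Prod.snd h

/-- Invariant subsets. -/
def Inv (M : SmGSet G) (A : Set M.α) : Prop := ∀ (g : G) (x : M.α), x ∈ A → M.smul g x ∈ A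

/-- Subobject on an invariant subset. -/
def sub (M : SmGSet G) (A : Set M.α) (hA : M.Inv A) : SmGSet G where
  α := A
  smul g x := ⟨M.smul g x.1, hA g x.1 x.2⟩
  one_smul x := Subtype.ext (M.one_smul x.1)
  mul_smul g h x := Subtype.ext (M.mul_smul g h x.1)
  smooth x := by
    have h : {g : G | M.smul g x.1 = x.1} =
        {g : G | (⟨M.smul g x.1, hA g x.1 x.2⟩ : A) = x} := by
      ext g
      simp only [Set.mem_setOf_eq, Subtype.ext_iff]
    exact h ▸ M.smooth x.1
  finitary := by
    haveI := M.finitary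
    refine Finite.of_injective
      (Quot.lift (fun x : A => Quot.mk (fun x y : M.α => ∃ g : G, M.smul g x = y) x.1)
        (fun a b h => Quot.sound (by
          obtain ⟨g, hg⟩ := h
          exact ⟨g, congrArg Subtype.val hg⟩))) ?_
    intro q q'
    obtain ⟨a, rfl⟩ := Quot.exists_rep q
    obtain ⟨b, rfl⟩ := Quot.exists_rep q'
    intro h
    obtain ⟨g, hg⟩ := (M.orbRel_equiv.eqvGen_iff).mp (Quot.eq.mp h)
    exact Quot.sound ⟨g, Subtype.ext hg⟩

/-- Inclusion of a subobject. -/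
def incl (M : SmGSet G) (A : Set M.α) (hA : M.Inv A) : sub M A hA ⟶ M :=
  ⟨Subtype.val, fun _ _ => rfl⟩

/-- Restriction of a morphism to subobjects. -/
def restrict {M N : SmGSet G} (f : M ⟶ N) {A : Set M.α} {B : Set N.α}
    (hA : M.Inv A) (hB : N.Inv B) (h : ∀ x ∈ A, f.toFun x ∈ B) :
    sub M A hA ⟶ sub N B hB :=
  ⟨fun x => ⟨f.toFun x.1, h x.1 x.2⟩, fun g x => Subtype.ext (f.equivariant g x.1)⟩

theorem restrict_incl {M N : SmGSet G} (f : M ⟶ N) {A : Set M.α} {B : Set N.α}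
    (hA : M.Inv A) (hB : N.Inv B) (h : ∀ x ∈ A, f.toFun x ∈ B) :
    restrict f hA hB h ≫ incl N B hB = incl M A hA ≫ f := rfl

section prodHoms

variable (hr : Roelcke G)

/-- First projection from the diagonal product. -/
def fstH (A B : SmGSet G) : dprod A B hr ⟶ A := ⟨Prod.fst, fun _ _ => rfl⟩

/-- Second projection from the diagonal product. -/
def sndH (A B : SmGSet G) : dprod A B hr ⟶ B := ⟨Prod.snd, fun _ _ => rfl⟩

/-- Pairing of morphisms into the diagonal product. -/
def pairH {M A B : SmGSet G} (f : M ⟶ A) (g : M ⟶ B) : M ⟶ dprod A B hr :=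
  ⟨fun x => (f.toFun x, g.toFun x), fun a x => Prod.ext (f.equivariant a x) (g.equivariant a x)⟩

end prodHoms

/-- Finite disjoint union. -/
def sigmaObj {ι : Type} [Finite ι] (f : ι → SmGSet G) : SmGSet G where
  α := Σ i, (f i).α
  smul g x := ⟨x.1, (f x.1).smul g x.2⟩
  one_smul x := by cases x with | mk i a => exact congrArg (Sigma.mk i) ((f i).one_smul a)
  mul_smul g h x := by cases x with | mk i a => exact congrArg (Sigma.mk i) ((f i).mul_smul g h a)
  smooth x := by
    obtain ⟨i, a⟩ := x
    have h : {g : G | (f i).smul g a = a} =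
        {g : G | (⟨i, (f i).smul g a⟩ : Σ i, (f i).α) = ⟨i, a⟩} := by
      ext g
      constructor
      · intro hg; exact congrArg (Sigma.mk i) hg
      · intro hg
        have := (Sigma.mk.inj_iff.mp hg).2
        exact eq_of_heq this
    exact h ▸ (f i).smooth a
  finitary := by
    have hfin : ∀ i, Finite (Quot fun x y : (f i).α => ∃ g : G, (f i).smul g x = y) :=
      fun i => (f i).finitary
    refine Finite.of_surjective
      (fun w : Σ i, Quot fun x y : (f i).α => ∃ g : G, (f i).smul g x = y =>
        Quot.mk _ (⟨w.1, w.2.out⟩ : Σ i, (f i).α)) ?_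
    intro q
    obtain ⟨⟨i, a⟩, rfl⟩ := Quot.exists_rep q
    refine ⟨⟨i, Quot.mk _ a⟩, ?_⟩
    obtain ⟨g, hg⟩ := ((f i).orbRel_equiv.eqvGen_iff).mp
      (Quot.eq.mp (Quot.out_eq (Quot.mk (fun x y : (f i).α => ∃ g : G, (f i).smul g x = y) a)))
    exact Quot.sound ⟨g, congrArg (Sigma.mk i) hg⟩

/-- Injection into a finite disjoint union. -/
def injH {ι : Type} [Finite ι] (f : ι → SmGSet G) (i : ι) : f i ⟶ sigmaObj f :=
  ⟨fun a => ⟨i, a⟩, fun _ _ => rfl⟩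

/-- Quotient by an invariant equivalence relation. -/
def quotObj [IsTopologicalGroup G] (M : SmGSet G) (r : M.α → M.α → Prop) (hinv : ∀ (g : G) (x y : M.α),
    r x y → r (M.smul g x) (M.smul g y)) : SmGSet G where
  α := Quot r
  smul g := Quot.map (M.smul g) (hinv g)
  one_smul q := by
    obtain ⟨x, rfl⟩ := Quot.exists_rep q
    exact congrArg (Quot.mk r) (M.one_smul x)
  mul_smul g h q := by
    obtain ⟨x, rfl⟩ := Quot.exists_rep q
    exact congrArg (Quot.mk r) (M.mul_smul g h x)
  smooth q := by
    obtain ⟨x, rfl⟩ := Quot.exists_rep q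
    let S : Subgroup G :=
      { carrier := {g : G | Quot.map (M.smul g) (hinv g) (Quot.mk r x) = Quot.mk r x}
        one_mem' := congrArg (Quot.mk r) (M.one_smul x)
        mul_mem' := by
          intro a b ha hb
          show Quot.mk r (M.smul (a * b) x) = Quot.mk r x
          have h1 : Quot.mk r (M.smul (a * b) x) = Quot.mk r (M.smul a (M.smul b x)) :=
            congrArg (Quot.mk r) (M.mul_smul a b x)
          have h2 : Quot.mk r (M.smul a (M.smul b x)) =
              Quot.map (M.smul a) (hinv a) (Quot.mk r (M.smul b x)) := rfl
          rw [h1, h2, show Quot.mk r (M.smul b x) = Quot.mk r x from hb]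
          exact ha
        inv_mem' := by
          intro a ha
          have h2 : Quot.mk r (M.smul a x) = Quot.mk r x := ha
          show Quot.mk r (M.smul a⁻¹ x) = Quot.mk r x
          calc Quot.mk r (M.smul a⁻¹ x)
              = Quot.map (M.smul a⁻¹) (hinv a⁻¹) (Quot.mk r x) := rfl
            _ = Quot.map (M.smul a⁻¹) (hinv a⁻¹) (Quot.mk r (M.smul a x)) := by rw [h2]
            _ = Quot.mk r (M.smul a⁻¹ (M.smul a x)) := rfl
            _ = Quot.mk r x := congrArg (Quot.mk r) (M.smul_cancel a x) }
    have hle : M.stab x ≤ S := by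
      intro g hg
      exact congrArg (Quot.mk r) (hg : M.smul g x = x)
    exact Subgroup.isOpen_mono hle (M.stab_isOpen x)
  finitary := by
    haveI := M.finitary
    refine Finite.of_surjective
      (fun q : Quot fun x y : M.α => ∃ g : G, M.smul g x = y =>
        Quot.mk _ (Quot.mk r q.out)) ?_
    intro z
    obtain ⟨q, rfl⟩ := Quot.exists_rep z
    obtain ⟨x, rfl⟩ := Quot.exists_rep q
    refine ⟨Quot.mk _ x, ?_⟩
    obtain ⟨g, hg⟩ := (M.orbRel_equiv.eqvGen_iff).mp
      (Quot.eq.mp (Quot.out_eq (Quot.mk (fun x y : M.α => ∃ g : G, M.smul g x = y) x)))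
    exact Quot.sound ⟨g, congrArg (Quot.mk r) hg⟩

/-- Projection to the quotient. -/
def quotH [IsTopologicalGroup G] (M : SmGSet G) (r : M.α → M.α → Prop) (hinv : ∀ (g : G) (x y : M.α),
    r x y → r (M.smul g x) (M.smul g y)) : M ⟶ quotObj M r hinv :=
  ⟨Quot.mk r, fun _ _ => rfl⟩

/-- An equivariant bijection gives an isomorphism. -/
noncomputable def isoOfBij {M N : SmGSet G} (f : M ⟶ N) (hf : Function.Bijective f.toFun) :
    M ≅ N := by
  let e := Equiv.ofBijective f.toFun hf
  refine ⟨f, ⟨e.symm, fun a y => e.injective ?_⟩, ?_, ?_⟩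
  · show f.toFun (e.symm (N.smul a y)) = f.toFun (M.smul a (e.symm y))
    rw [show f.toFun (e.symm (N.smul a y)) = N.smul a y from e.apply_symm_apply _,
      f.equivariant, show f.toFun (e.symm y) = y from e.apply_symm_apply y]
  · apply SmHom.ext
    funext x
    exact e.symm_apply_apply x
  · apply SmHom.ext
    funext y
    exact e.apply_symm_apply y

theorem iso_bijective {M N : SmGSet G} (e : M ≅ N) : Function.Bijective e.hom.toFun := by
  refine Function.bijective_iff_has_inverse.mpr ⟨e.inv.toFun, fun x => ?_, fun y => ?_⟩
  · exact congrFun (congrArg SmHom.toFun e.hom_inv_id) x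
  · exact congrFun (congrArg SmHom.toFun e.inv_hom_id) y

end SmGSet
namespace SmGSet

open CategoryTheory Limits

variable {G : Type} [Group G] [TopologicalSpace G]

/-- Orbit equivalence relation. -/
abbrev orel (M : SmGSet G) : M.α → M.α → Prop := fun x y : M.α => ∃ g : G, M.smul g x = y

/-- Set of orbits. -/
abbrev oQt (M : SmGSet G) : Type := Quot (orel M)

/-- Orbit of a point. -/
def idx (M : SmGSet G) (x : M.α) : oQt M := Quot.mk _ x

theorem oQt_finite (M : SmGSet G) : Finite (oQt M) := M.finitary

theorem idx_eq_iff (M : SmGSet G) {x y : M.α} :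
    idx M x = idx M y ↔ ∃ g : G, M.smul g x = y :=
  ⟨fun h => (M.orbRel_equiv.eqvGen_iff).mp (Quot.eq.mp h), fun h => Quot.sound h⟩

theorem idx_smul (M : SmGSet G) (g : G) (x : M.α) : idx M (M.smul g x) = idx M x :=
  (Quot.sound ⟨g, rfl⟩).symm

/-- Orbit class of an orbit. -/
def cls (M : SmGSet G) (i : oQt M) : Set M.α := {x | idx M x = i}

theorem cls_inv (M : SmGSet G) (i : oQt M) : M.Inv (cls M i) := by
  intro g x hx
  show idx M (M.smul g x) = i
  rw [idx_smul]; exact hx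

theorem cls_self (M : SmGSet G) (x : M.α) : x ∈ cls M (idx M x) := rfl

/-- Orbit class as a subobject. -/
def clsObj (M : SmGSet G) (i : oQt M) : SmGSet G := sub M (cls M i) (cls_inv M i)

/-- Inclusion of an orbit class. -/
def clsIncl (M : SmGSet G) (i : oQt M) : clsObj M i ⟶ M := incl M (cls M i) (cls_inv M i)

theorem clsObj_transitive (M : SmGSet G) (i : oQt M) : IsTransitive (clsObj M i) := by
  constructor
  · obtain ⟨x, rfl⟩ := Quot.exists_rep i
    exact ⟨⟨x, rfl⟩⟩
  · rintro ⟨x, hx⟩ ⟨y, hy⟩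
    obtain ⟨g, hg⟩ := idx_eq_iff M |>.mp (hx.trans hy.symm)
    exact ⟨g, Subtype.ext hg⟩

theorem quotObj_transitive [IsTopologicalGroup G] (M : SmGSet G) (r : M.α → M.α → Prop)
    (hinv : ∀ (g : G) (x y : M.α), r x y → r (M.smul g x) (M.smul g y))
    (hM : IsTransitive M) : IsTransitive (quotObj M r hinv) := by
  obtain ⟨⟨x0⟩, htr⟩ := hM
  constructor
  · exact ⟨Quot.mk r x0⟩
  · intro a b
    obtain ⟨x, rfl⟩ := Quot.exists_rep a
    obtain ⟨y, rfl⟩ := Quot.exists_rep b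
    obtain ⟨g, hg⟩ := htr x y
    exact ⟨g, congrArg (Quot.mk r) hg⟩

section cones

variable (hr : Roelcke G)

/-- Concrete binary product cone. -/
noncomputable def coneDP (F : Discrete WalkingPair ⥤ SmGSet G) : Cone F where
  pt := dprod (F.obj ⟨WalkingPair.left⟩) (F.obj ⟨WalkingPair.right⟩) hr
  π := Discrete.natTrans fun j =>
    match j with
    | ⟨WalkingPair.left⟩ => fstH hr _ _
    | ⟨WalkingPair.right⟩ => sndH hr _ _

/-- The concrete binary product cone is a limit cone. -/
noncomputable def coneDPIsLimit (F : Discrete WalkingPair ⥤ SmGSet G) : IsLimit (coneDP hr F) where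
  lift c := pairH hr (c.π.app ⟨WalkingPair.left⟩) (c.π.app ⟨WalkingPair.right⟩)
  fac c j := by
    match j with
    | ⟨WalkingPair.left⟩ => rfl
    | ⟨WalkingPair.right⟩ => rfl
  uniq c m h := by
    apply SmHom.ext
    funext x
    have h1 := congrFun (congrArg SmHom.toFun (h ⟨WalkingPair.left⟩)) x
    have h2 := congrFun (congrArg SmHom.toFun (h ⟨WalkingPair.right⟩)) x
    exact Prod.ext h1 h2

/-- Concrete finite coproduct cocone. -/
def coconeSig {ι : Type} [Finite ι] (F : Discrete ι ⥤ SmGSet G) : Cocone F where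
  pt := sigmaObj fun i => F.obj ⟨i⟩
  ι := Discrete.natTrans fun j => injH (fun i => F.obj ⟨i⟩) j.as

/-- The concrete finite coproduct cocone is a colimit cocone. -/
def coconeSigIsColimit {ι : Type} [Finite ι] (F : Discrete ι ⥤ SmGSet G) :
    IsColimit (coconeSig F) where
  desc c :=
    { toFun := fun x => (c.ι.app ⟨x.1⟩).toFun x.2
      equivariant := by
        intro g x
        cases x with
        | mk i a => exact (c.ι.app ⟨i⟩).equivariant g a }
  fac c j := rfl
  uniq c m h := by
    apply SmHom.ext
    funext x
    cases x with
    | mk i a => exact congrFun (congrArg SmHom.toFun (h ⟨i⟩)) a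

end cones

section transfer

variable {K : Type} [Group K] [TopologicalSpace K]
variable (T : SmGSet G ⥤ SmGSet K)

/-- Exact functors preserve binary products, concretely. -/
theorem prodCmp_bijective (hrG : Roelcke G) (hrK : Roelcke K)
    [PreservesFiniteLimits T] (A B : SmGSet G) :
    Function.Bijective (fun m : (T.obj (dprod A B hrG)).α =>
      ((T.map (fstH hrG A B)).toFun m, (T.map (sndH hrG A B)).toFun m)) := by
  let F : Discrete WalkingPair ⥤ SmGSet G :=
    Discrete.functor fun w => WalkingPair.casesOn w A B
  have hlim1 : IsLimit (T.mapCone (coneDP hrG F)) := isLimitOfPreserves T (coneDPIsLimit hrG F)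
  have hlim2 : IsLimit (coneDP hrK (F ⋙ T)) := coneDPIsLimit hrK (F ⋙ T)
  let e := IsLimit.conePointUniqueUpToIso hlim1 hlim2
  have h1 : ∀ m, (e.hom.toFun m).1 = (T.map (fstH hrG A B)).toFun m := fun m =>
    congrFun (congrArg SmHom.toFun
      (IsLimit.conePointUniqueUpToIso_hom_comp hlim1 hlim2 ⟨WalkingPair.left⟩)) m
  have h2 : ∀ m, (e.hom.toFun m).2 = (T.map (sndH hrG A B)).toFun m := fun m =>
    congrFun (congrArg SmHom.toFun
      (IsLimit.conePointUniqueUpToIso_hom_comp hlim1 hlim2 ⟨WalkingPair.right⟩)) m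
  have key : (fun m : (T.obj (dprod A B hrG)).α =>
      ((T.map (fstH hrG A B)).toFun m, (T.map (sndH hrG A B)).toFun m)) = e.hom.toFun := by
    funext m
    exact Prod.ext (h1 m).symm (h2 m).symm
  rw [key]
  exact iso_bijective ⟨e.hom, e.inv, e.hom_inv_id, e.inv_hom_id⟩

/-- Exact functors preserve finite invariant partitions, concretely. -/
theorem partition_transfer [PreservesFiniteColimits T] {ι : Type} [Finite ι]
    (M : SmGSet G) (A : ι → Set M.α) (hA : ∀ i, M.Inv (A i))
    (hdis : ∀ i j x, x ∈ A i → x ∈ A j → i = j) (hcov : ∀ x, ∃ i, x ∈ A i) :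
    (∀ m : (T.obj M).α, ∃ i a, (T.map (incl M (A i) (hA i))).toFun a = m) ∧
    (∀ i j a b, (T.map (incl M (A i) (hA i))).toFun a = (T.map (incl M (A j) (hA j))).toFun b
      → i = j) := by
  haveI : Fintype ι := Fintype.ofFinite ι
  let F : Discrete ι ⥤ SmGSet G := Discrete.functor fun i => sub M (A i) (hA i)
  have hdesc : ∀ (c : Cocone F) (i : ι) (x : M.α) (hx : x ∈ A i),
      (c.ι.app ⟨(hcov x).choose⟩).toFun ⟨x, (hcov x).choose_spec⟩ =
        (c.ι.app ⟨i⟩).toFun ⟨x, hx⟩ := by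
    intro c i x hx
    have h := hdis _ i x (hcov x).choose_spec hx
    subst h
    rfl
  let myCocone : Cocone F :=
    { pt := M
      ι := Discrete.natTrans fun j => incl M (A j.as) (hA j.as) }
  have hcolim1 : IsColimit myCocone :=
    { desc := fun c =>
        { toFun := fun x => (c.ι.app ⟨(hcov x).choose⟩).toFun ⟨x, (hcov x).choose_spec⟩
          equivariant := by
            intro g x
            show (c.ι.app ⟨(hcov (M.smul g x)).choose⟩).toFun
                ⟨M.smul g x, (hcov (M.smul g x)).choose_spec⟩
              = c.pt.smul g ((c.ι.app ⟨(hcov x).choose⟩).toFun ⟨x, (hcov x).choose_spec⟩)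
            rw [hdesc c (hcov x).choose (M.smul g x) (hA _ g x (hcov x).choose_spec)]
            exact (c.ι.app ⟨(hcov x).choose⟩).equivariant g ⟨x, (hcov x).choose_spec⟩ }
      fac := fun c j => by
        apply SmHom.ext
        funext a
        exact hdesc c j.as a.1 a.2
      uniq := fun c m h => by
        apply SmHom.ext
        funext x
        exact congrFun (congrArg SmHom.toFun (h ⟨(hcov x).choose⟩))
          ⟨x, (hcov x).choose_spec⟩ }
  have hcolim2 : IsColimit (T.mapCocone myCocone) := isColimitOfPreserves T hcolim1
  have hcolim3 : IsColimit (coconeSig (F ⋙ T)) := coconeSigIsColimit (F ⋙ T)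
  let e := IsColimit.coconePointUniqueUpToIso hcolim3 hcolim2
  have happ : ∀ (i : ι) (a : (T.obj (sub M (A i) (hA i))).α),
      e.hom.toFun ⟨i, a⟩ = (T.map (incl M (A i) (hA i))).toFun a := fun i a =>
    congrFun (congrArg SmHom.toFun
      (IsColimit.comp_coconePointUniqueUpToIso_hom hcolim3 hcolim2 ⟨i⟩)) a
  have hbij : Function.Bijective e.hom.toFun :=
    iso_bijective ⟨e.hom, e.inv, e.hom_inv_id, e.inv_hom_id⟩
  constructor
  · intro m
    obtain ⟨⟨i, a⟩, ha⟩ := hbij.2 m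
    exact ⟨i, a, (happ i a).symm.trans ha⟩
  · intro i j a b hab
    have : e.hom.toFun ⟨i, a⟩ = e.hom.toFun ⟨j, b⟩ := by rw [happ, happ]; exact hab
    have := hbij.1 this
    exact congrArg Sigma.fst this

/-- Exact functors reflect pointwise distinctness of morphisms. -/
theorem reflects_ne (hrG : Roelcke G) (hrK : Roelcke K)
    [PreservesFiniteLimits T] [PreservesFiniteColimits T]
    {A B : SmGSet G} (u v : A ⟶ B) (h : ∀ a, u.toFun a ≠ v.toFun a)
    (m : (T.obj A).α) : (T.map u).toFun m ≠ (T.map v).toFun m := by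
  intro heq
  -- diagonal and codiagonal invariant subsets of `dprod B B`
  let D : Set (dprod B B hrG).α := {z | z.1 = z.2}
  have hD : (dprod B B hrG).Inv D := by
    intro g z hz
    show B.smul g z.1 = B.smul g z.2
    rw [show z.1 = z.2 from hz]
  have hDc : (dprod B B hrG).Inv Dᶜ := by
    intro g z hz hmem
    apply hz
    have h1 : B.smul g z.1 = B.smul g z.2 := hmem
    have h2 := congrArg (B.smul g⁻¹) h1
    rwa [B.smul_cancel, B.smul_cancel] at h2
  let Afam : Bool → Set (dprod B B hrG).α := fun b => match b with
    | true => D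
    | false => Dᶜ
  have hAfam : ∀ b, (dprod B B hrG).Inv (Afam b) := fun b => by
    cases b
    · exact hDc
    · exact hD
  have hpart := partition_transfer T (dprod B B hrG) Afam hAfam
    (fun i j z hi hj => by
      cases i <;> cases j
      · rfl
      · exact absurd hj hi
      · exact absurd hi hj
      · rfl)
    (fun z => by
      by_cases hz : z.1 = z.2
      · exact ⟨true, hz⟩
      · exact ⟨false, hz⟩)
  let δ0 : B ⟶ sub (dprod B B hrG) (Afam true) (hAfam true) :=
    ⟨fun x => ⟨(x, x), rfl⟩, fun g x => Subtype.ext rfl⟩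
  let h0 : A ⟶ sub (dprod B B hrG) (Afam false) (hAfam false) :=
    ⟨fun a => ⟨(u.toFun a, v.toFun a), h a⟩,
      fun g a => Subtype.ext (Prod.ext (u.equivariant g a) (v.equivariant g a))⟩
  have tripleComp : ∀ {A' B' C' D' : SmGSet G} (f : A' ⟶ B') (g : B' ⟶ C') (k : C' ⟶ D')
      (x : (T.obj A').α), (T.map k).toFun ((T.map g).toFun ((T.map f).toFun x))
        = (T.map ((f ≫ g) ≫ k)).toFun x := by
    intro A' B' C' D' f g k x
    rw [map_comp_toFun T (f ≫ g) k, map_comp_toFun T f g]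
  have hinj := (prodCmp_bijective T hrG hrK B B).1
  have c1 : (T.map (fstH hrG B B)).toFun ((T.map (incl _ (Afam true) (hAfam true))).toFun
      ((T.map δ0).toFun ((T.map u).toFun m))) = (T.map u).toFun m :=
    (tripleComp δ0 (incl _ (Afam true) (hAfam true)) (fstH hrG B B) _).trans (by
      rw [show (δ0 ≫ incl _ (Afam true) (hAfam true)) ≫ fstH hrG B B = 𝟙 B from rfl,
        map_id_toFun])
  have c2 : (T.map (sndH hrG B B)).toFun ((T.map (incl _ (Afam true) (hAfam true))).toFun
      ((T.map δ0).toFun ((T.map u).toFun m))) = (T.map u).toFun m :=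
    (tripleComp δ0 (incl _ (Afam true) (hAfam true)) (sndH hrG B B) _).trans (by
      rw [show (δ0 ≫ incl _ (Afam true) (hAfam true)) ≫ sndH hrG B B = 𝟙 B from rfl,
        map_id_toFun])
  have c3 : (T.map (fstH hrG B B)).toFun ((T.map (incl _ (Afam false) (hAfam false))).toFun
      ((T.map h0).toFun m)) = (T.map u).toFun m :=
    (tripleComp h0 (incl _ (Afam false) (hAfam false)) (fstH hrG B B) _).trans (by
      rw [show (h0 ≫ incl _ (Afam false) (hAfam false)) ≫ fstH hrG B B = u from rfl])
  have c4 : (T.map (sndH hrG B B)).toFun ((T.map (incl _ (Afam false) (hAfam false))).toFun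
      ((T.map h0).toFun m)) = (T.map u).toFun m :=
    (tripleComp h0 (incl _ (Afam false) (hAfam false)) (sndH hrG B B) _).trans (by
      rw [show (h0 ≫ incl _ (Afam false) (hAfam false)) ≫ sndH hrG B B = v from rfl]
      exact heq.symm)
  have hww : (T.map (incl _ (Afam true) (hAfam true))).toFun
        ((T.map δ0).toFun ((T.map u).toFun m))
      = (T.map (incl _ (Afam false) (hAfam false))).toFun ((T.map h0).toFun m) := by
    apply hinj
    show ((T.map (fstH hrG B B)).toFun _, (T.map (sndH hrG B B)).toFun _)
      = ((T.map (fstH hrG B B)).toFun _, (T.map (sndH hrG B B)).toFun _)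
    rw [c1, c2, c3, c4]
  exact Bool.noConfusion (hpart.2 true false _ _ hww)

end transfer

end SmGSet
namespace SmGSet

open CategoryTheory Limits

variable {G K : Type} [Group G] [TopologicalSpace G] [Group K] [TopologicalSpace K]

/-- The orbit pieces of `T (M × M)` inside `T M × T M`. -/
def piece (T : SmGSet G ⥤ SmGSet K) (hrG : Roelcke G) (M : SmGSet G)
    (i : oQt (dprod M M hrG)) : Set ((T.obj M).α × (T.obj M).α) :=
  {w | ∃ m : (T.obj (sub (dprod M M hrG) (cls (dprod M M hrG) i)
      (cls_inv (dprod M M hrG) i))).α,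
    ((T.map (incl (dprod M M hrG) (cls (dprod M M hrG) i) (cls_inv (dprod M M hrG) i)
        ≫ fstH hrG M M)).toFun m,
     (T.map (incl (dprod M M hrG) (cls (dprod M M hrG) i) (cls_inv (dprod M M hrG) i)
        ≫ sndH hrG M M)).toFun m) = w}

variable (T : SmGSet G ⥤ SmGSet K) (hrG : Roelcke G) (M : SmGSet G)

theorem piece_smul (i : oQt (dprod M M hrG)) (k : K) {w : (T.obj M).α × (T.obj M).α}
    (hw : w ∈ piece T hrG M i) :
    ((T.obj M).smul k w.1, (T.obj M).smul k w.2) ∈ piece T hrG M i := by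
  obtain ⟨m, rfl⟩ := hw
  exact ⟨(T.obj (sub (dprod M M hrG) (cls (dprod M M hrG) i)
      (cls_inv (dprod M M hrG) i))).smul k m,
    Prod.ext ((T.map _).equivariant k m) ((T.map _).equivariant k m)⟩

theorem piece_complete (hrK : Roelcke K) [PreservesFiniteLimits T] [PreservesFiniteColimits T]
    (w : (T.obj M).α × (T.obj M).α) : ∃ i, w ∈ piece T hrG M i := by
  haveI := oQt_finite (dprod M M hrG)
  obtain ⟨u, hu⟩ := (prodCmp_bijective T hrG hrK M M).2 w
  obtain ⟨i, a, ha⟩ := (partition_transfer T (dprod M M hrG) (cls (dprod M M hrG))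
      (cls_inv (dprod M M hrG)) (fun i j z hi hj => hi.symm.trans hj)
      (fun z => ⟨idx _ z, rfl⟩)).1 u
  refine ⟨i, a, ?_⟩
  rw [map_comp_toFun, map_comp_toFun, ha]
  exact hu

theorem piece_disjoint (hrK : Roelcke K) [PreservesFiniteLimits T] [PreservesFiniteColimits T]
    {w : (T.obj M).α × (T.obj M).α} {i j : oQt (dprod M M hrG)}
    (hi : w ∈ piece T hrG M i) (hj : w ∈ piece T hrG M j) : i = j := by
  haveI := oQt_finite (dprod M M hrG)
  obtain ⟨a, ha⟩ := hi
  obtain ⟨b, hb⟩ := hj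
  have h1 : (T.map (incl (dprod M M hrG) (cls (dprod M M hrG) i)
      (cls_inv (dprod M M hrG) i))).toFun a
    = (T.map (incl (dprod M M hrG) (cls (dprod M M hrG) j)
      (cls_inv (dprod M M hrG) j))).toFun b := by
    apply (prodCmp_bijective T hrG hrK M M).1
    show ((T.map (fstH hrG M M)).toFun _, (T.map (sndH hrG M M)).toFun _)
      = ((T.map (fstH hrG M M)).toFun _, (T.map (sndH hrG M M)).toFun _)
    rw [← map_comp_toFun T _ (fstH hrG M M) a, ← map_comp_toFun T _ (sndH hrG M M) a,
      ← map_comp_toFun T _ (fstH hrG M M) b, ← map_comp_toFun T _ (sndH hrG M M) b,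
      ha, hb]
  exact (partition_transfer T (dprod M M hrG) (cls (dprod M M hrG))
      (cls_inv (dprod M M hrG)) (fun i j z hi hj => hi.symm.trans hj)
      (fun z => ⟨idx _ z, rfl⟩)).2 i j a b h1

theorem piece_diag (hrK : Roelcke K) [PreservesFiniteLimits T] [PreservesFiniteColimits T]
    (hM : IsTransitive M) (x : M.α) :
    (∀ p : (T.obj M).α, (p, p) ∈ piece T hrG M (idx (dprod M M hrG) (x, x))) ∧
    (∀ p p' : (T.obj M).α, (p, p') ∈ piece T hrG M (idx (dprod M M hrG) (x, x)) → p = p') := by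
  set M2 := dprod M M hrG with hM2
  set iΔ := idx M2 (x, x) with hiΔ
  have hdiag : ∀ z : M2.α, idx M2 z = iΔ → z.2 = z.1 := by
    intro z hz
    obtain ⟨g, hg⟩ := (idx_eq_iff M2).mp hz
    have h1 : M.smul g z.1 = x := congrArg Prod.fst hg
    have h2 : M.smul g z.2 = x := congrArg Prod.snd hg
    have := h1.trans h2.symm
    have h3 := congrArg (M.smul g⁻¹) this
    rw [M.smul_cancel, M.smul_cancel] at h3
    exact h3.symm
  let δ0 : M ⟶ sub M2 (cls M2 iΔ) (cls_inv M2 iΔ) :=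
    ⟨fun z => ⟨(z, z), by
      obtain ⟨g, hg⟩ := hM.2 z x
      exact (idx_eq_iff M2).mpr ⟨g, Prod.ext hg hg⟩⟩,
      fun g z => Subtype.ext rfl⟩
  constructor
  · intro p
    refine ⟨(T.map δ0).toFun p, Prod.ext ?_ ?_⟩
    · show (T.map (incl M2 (cls M2 iΔ) (cls_inv M2 iΔ) ≫ fstH hrG M M)).toFun
        ((T.map δ0).toFun p) = p
      rw [← map_comp_toFun T δ0 _ p,
        show δ0 ≫ incl M2 (cls M2 iΔ) (cls_inv M2 iΔ) ≫ fstH hrG M M = 𝟙 M from rfl,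
        map_id_toFun]
    · show (T.map (incl M2 (cls M2 iΔ) (cls_inv M2 iΔ) ≫ sndH hrG M M)).toFun
        ((T.map δ0).toFun p) = p
      rw [← map_comp_toFun T δ0 _ p,
        show δ0 ≫ incl M2 (cls M2 iΔ) (cls_inv M2 iΔ) ≫ sndH hrG M M = 𝟙 M from rfl,
        map_id_toFun]
  · intro p p' hp
    obtain ⟨m, hm⟩ := hp
    have heq : incl M2 (cls M2 iΔ) (cls_inv M2 iΔ) ≫ fstH hrG M M
        = incl M2 (cls M2 iΔ) (cls_inv M2 iΔ) ≫ sndH hrG M M := by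
      apply SmHom.ext
      funext z
      exact (hdiag z.1 z.2).symm
    have h1 : p = (T.map (incl M2 (cls M2 iΔ) (cls_inv M2 iΔ) ≫ fstH hrG M M)).toFun m :=
      (congrArg Prod.fst hm).symm
    have h2 : (T.map (incl M2 (cls M2 iΔ) (cls_inv M2 iΔ) ≫ sndH hrG M M)).toFun m = p' :=
      congrArg Prod.snd hm
    rw [h1, ← h2, heq]

theorem piece_swap (x x' : M.α) {p p' : (T.obj M).α}
    (hp : (p, p') ∈ piece T hrG M (idx (dprod M M hrG) (x, x'))) :
    (p', p) ∈ piece T hrG M (idx (dprod M M hrG) (x', x)) := by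
  set M2 := dprod M M hrG with hM2
  obtain ⟨m, hm⟩ := hp
  let sw : M2 ⟶ M2 := pairH hrG (sndH hrG M M) (fstH hrG M M)
  have hmem : ∀ z ∈ cls M2 (idx M2 (x, x')), sw.toFun z ∈ cls M2 (idx M2 (x', x)) := by
    intro z hz
    obtain ⟨g, hg⟩ := (idx_eq_iff M2).mp hz
    exact (idx_eq_iff M2).mpr ⟨g, Prod.ext (congrArg Prod.snd hg) (congrArg Prod.fst hg)⟩
  let r := restrict sw (cls_inv M2 (idx M2 (x, x'))) (cls_inv M2 (idx M2 (x', x))) hmem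
  refine ⟨(T.map r).toFun m, Prod.ext ?_ ?_⟩
  · show (T.map (incl M2 (cls M2 (idx M2 (x', x))) (cls_inv M2 (idx M2 (x', x)))
        ≫ fstH hrG M M)).toFun ((T.map r).toFun m) = p'
    rw [← map_comp_toFun T r _ m,
      show r ≫ incl M2 (cls M2 (idx M2 (x', x))) (cls_inv M2 (idx M2 (x', x))) ≫ fstH hrG M M
        = incl M2 (cls M2 (idx M2 (x, x'))) (cls_inv M2 (idx M2 (x, x'))) ≫ sndH hrG M M
        from rfl]
    exact congrArg Prod.snd hm
  · show (T.map (incl M2 (cls M2 (idx M2 (x', x))) (cls_inv M2 (idx M2 (x', x)))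
        ≫ sndH hrG M M)).toFun ((T.map r).toFun m) = p
    rw [← map_comp_toFun T r _ m,
      show r ≫ incl M2 (cls M2 (idx M2 (x', x))) (cls_inv M2 (idx M2 (x', x))) ≫ sndH hrG M M
        = incl M2 (cls M2 (idx M2 (x, x'))) (cls_inv M2 (idx M2 (x, x'))) ≫ fstH hrG M M
        from rfl]
    exact congrArg Prod.fst hm

theorem piece_triple (x x' x'' : M.α)
    (m : (T.obj (sub (dprod (dprod M M hrG) M hrG)
      (cls (dprod (dprod M M hrG) M hrG) (idx (dprod (dprod M M hrG) M hrG) ((x, x'), x'')))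
      (cls_inv (dprod (dprod M M hrG) M hrG)
        (idx (dprod (dprod M M hrG) M hrG) ((x, x'), x''))))).α) :
    ∃ p1 p2 p3 : (T.obj M).α,
      (p1, p2) ∈ piece T hrG M (idx (dprod M M hrG) (x, x')) ∧
      (p1, p3) ∈ piece T hrG M (idx (dprod M M hrG) (x, x'')) ∧
      (p2, p3) ∈ piece T hrG M (idx (dprod M M hrG) (x', x'')) := by
  set M2 := dprod M M hrG with hM2
  set M3 := dprod (dprod M M hrG) M hrG with hM3
  set c3 := idx M3 ((x, x'), x'') with hc3
  let ι3 := incl M3 (cls M3 c3) (cls_inv M3 c3)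
  let ρ1 : sub M3 (cls M3 c3) (cls_inv M3 c3) ⟶ M := ι3 ≫ fstH hrG M2 M ≫ fstH hrG M M
  let ρ2 : sub M3 (cls M3 c3) (cls_inv M3 c3) ⟶ M := ι3 ≫ fstH hrG M2 M ≫ sndH hrG M M
  let ρ3 : sub M3 (cls M3 c3) (cls_inv M3 c3) ⟶ M := ι3 ≫ sndH hrG M2 M
  refine ⟨(T.map ρ1).toFun m, (T.map ρ2).toFun m, (T.map ρ3).toFun m, ?_, ?_, ?_⟩
  · have hmem : ∀ z ∈ cls M3 c3, (fstH hrG M2 M).toFun z ∈ cls M2 (idx M2 (x, x')) := by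
      intro z hz
      obtain ⟨g, hg⟩ := (idx_eq_iff M3).mp hz
      exact (idx_eq_iff M2).mpr ⟨g, congrArg Prod.fst hg⟩
    let r := restrict (fstH hrG M2 M) (cls_inv M3 c3) (cls_inv M2 (idx M2 (x, x'))) hmem
    refine ⟨(T.map r).toFun m, Prod.ext ?_ ?_⟩
    · show (T.map (incl M2 (cls M2 (idx M2 (x, x'))) (cls_inv M2 (idx M2 (x, x')))
          ≫ fstH hrG M M)).toFun ((T.map r).toFun m) = (T.map ρ1).toFun m
      rw [← map_comp_toFun T r _ m]
      rfl
    · show (T.map (incl M2 (cls M2 (idx M2 (x, x'))) (cls_inv M2 (idx M2 (x, x')))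
          ≫ sndH hrG M M)).toFun ((T.map r).toFun m) = (T.map ρ2).toFun m
      rw [← map_comp_toFun T r _ m]
      rfl
  · have hmem : ∀ z ∈ cls M3 c3,
        (pairH hrG (fstH hrG M2 M ≫ fstH hrG M M) (sndH hrG M2 M)).toFun z
          ∈ cls M2 (idx M2 (x, x'')) := by
      intro z hz
      obtain ⟨g, hg⟩ := (idx_eq_iff M3).mp hz
      have c1 : ((M3.smul g z).1).1 = x := congrArg (fun t : (M.α × M.α) × M.α => t.1.1) hg
      have c2 : (M3.smul g z).2 = x'' := congrArg (fun t : (M.α × M.α) × M.α => t.2) hg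
      exact (idx_eq_iff M2).mpr ⟨g, Prod.ext c1 c2⟩
    let r := restrict (pairH hrG (fstH hrG M2 M ≫ fstH hrG M M) (sndH hrG M2 M))
      (cls_inv M3 c3) (cls_inv M2 (idx M2 (x, x''))) hmem
    refine ⟨(T.map r).toFun m, Prod.ext ?_ ?_⟩
    · show (T.map (incl M2 (cls M2 (idx M2 (x, x''))) (cls_inv M2 (idx M2 (x, x'')))
          ≫ fstH hrG M M)).toFun ((T.map r).toFun m) = (T.map ρ1).toFun m
      rw [← map_comp_toFun T r _ m]
      rfl
    · show (T.map (incl M2 (cls M2 (idx M2 (x, x''))) (cls_inv M2 (idx M2 (x, x'')))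
          ≫ sndH hrG M M)).toFun ((T.map r).toFun m) = (T.map ρ3).toFun m
      rw [← map_comp_toFun T r _ m]
      rfl
  · have hmem : ∀ z ∈ cls M3 c3,
        (pairH hrG (fstH hrG M2 M ≫ sndH hrG M M) (sndH hrG M2 M)).toFun z
          ∈ cls M2 (idx M2 (x', x'')) := by
      intro z hz
      obtain ⟨g, hg⟩ := (idx_eq_iff M3).mp hz
      have c1 : ((M3.smul g z).1).2 = x' := congrArg (fun t : (M.α × M.α) × M.α => t.1.2) hg
      have c2 : (M3.smul g z).2 = x'' := congrArg (fun t : (M.α × M.α) × M.α => t.2) hg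
      exact (idx_eq_iff M2).mpr ⟨g, Prod.ext c1 c2⟩
    let r := restrict (pairH hrG (fstH hrG M2 M ≫ sndH hrG M M) (sndH hrG M2 M))
      (cls_inv M3 c3) (cls_inv M2 (idx M2 (x', x''))) hmem
    refine ⟨(T.map r).toFun m, Prod.ext ?_ ?_⟩
    · show (T.map (incl M2 (cls M2 (idx M2 (x', x''))) (cls_inv M2 (idx M2 (x', x'')))
          ≫ fstH hrG M M)).toFun ((T.map r).toFun m) = (T.map ρ2).toFun m
      rw [← map_comp_toFun T r _ m]
      rfl
    · show (T.map (incl M2 (cls M2 (idx M2 (x', x''))) (cls_inv M2 (idx M2 (x', x'')))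
          ≫ sndH hrG M M)).toFun ((T.map r).toFun m) = (T.map ρ3).toFun m
      rw [← map_comp_toFun T r _ m]
      rfl

theorem piece_map_eq {M' : SmGSet G} (p : M ⟶ M') (i : oQt (dprod M M hrG))
    (h : ∀ z : M.α × M.α, idx (dprod M M hrG) z = i → p.toFun z.1 = p.toFun z.2)
    {w : (T.obj M).α × (T.obj M).α} (hw : w ∈ piece T hrG M i) :
    (T.map p).toFun w.1 = (T.map p).toFun w.2 := by
  obtain ⟨m, rfl⟩ := hw
  rw [← map_comp_toFun T _ p m, ← map_comp_toFun T _ p m]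
  have heq : (incl (dprod M M hrG) (cls (dprod M M hrG) i) (cls_inv (dprod M M hrG) i)
        ≫ fstH hrG M M) ≫ p
      = (incl (dprod M M hrG) (cls (dprod M M hrG) i) (cls_inv (dprod M M hrG) i)
        ≫ sndH hrG M M) ≫ p := by
    apply SmHom.ext
    funext z
    exact h z.1 z.2
  rw [heq]

theorem piece_map_ne (hrK : Roelcke K) [PreservesFiniteLimits T] [PreservesFiniteColimits T]
    {M' : SmGSet G} (p : M ⟶ M') (i : oQt (dprod M M hrG))
    (z0 : M.α × M.α) (hz0 : idx (dprod M M hrG) z0 = i) (hne : p.toFun z0.1 ≠ p.toFun z0.2)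
    {w : (T.obj M).α × (T.obj M).α} (hw : w ∈ piece T hrG M i) :
    (T.map p).toFun w.1 ≠ (T.map p).toFun w.2 := by
  have hall : ∀ z : (dprod M M hrG).α, idx (dprod M M hrG) z = i →
      p.toFun z.1 ≠ p.toFun z.2 := by
    intro z hz hpe
    obtain ⟨g, hg⟩ := (idx_eq_iff (dprod M M hrG)).mp (hz.trans hz0.symm)
    apply hne
    have h1 : M.smul g z.1 = z0.1 := congrArg Prod.fst hg
    have h2 : M.smul g z.2 = z0.2 := congrArg Prod.snd hg
    rw [← h1, ← h2, p.equivariant, p.equivariant, hpe]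
  obtain ⟨m, rfl⟩ := hw
  rw [← map_comp_toFun T _ p m, ← map_comp_toFun T _ p m]
  exact reflects_ne T hrG hrK
    ((incl (dprod M M hrG) (cls (dprod M M hrG) i) (cls_inv (dprod M M hrG) i)
      ≫ fstH hrG M M) ≫ p)
    ((incl (dprod M M hrG) (cls (dprod M M hrG) i) (cls_inv (dprod M M hrG) i)
      ≫ sndH hrG M M) ≫ p)
    (fun z => hall z.1 z.2) m

end SmGSet
open SmGSet in
theorem stmt_17 {G H K : Type}
    [Group G] [TopologicalSpace G] [IsTopologicalGroup G]
    [Group H] [TopologicalSpace H] [IsTopologicalGroup H]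
    [Group K] [TopologicalSpace K] [IsTopologicalGroup K]
    (hG : IsProOligomorphic G) (hH : IsProOligomorphic H) (hK : IsProOligomorphic K)
    (hsplit : ∀ (H' : Type) [Group H'] [TopologicalSpace H'] [IsTopologicalGroup H'],
      IsProOligomorphic H' → ∀ W : SmGSet (G × H'), IsTransitive W →
        ∃ (X : SmGSet G) (Y : SmGSet H'),
          IsTransitive X ∧ IsTransitive Y ∧ Nonempty (W ≅ eprod X Y))
    (Φ : SmGSet G ⥤ SmGSet K) (Ψ : SmGSet H ⥤ SmGSet K)
    (hΦ₁ : Limits.PreservesFiniteLimits Φ) (hΦ₂ : Limits.PreservesFiniteColimits Φ)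
    (hΨ₁ : Limits.PreservesFiniteLimits Ψ) (hΨ₂ : Limits.PreservesFiniteColimits Ψ)
    (htrans : ∀ (X : SmGSet G) (Y : SmGSet H), IsTransitive X → IsTransitive Y →
      IsTransitive (dprod (Φ.obj X) (Ψ.obj Y) hK.roelcke))
    (X : SmGSet G) (hX : IsTransitive X) (Y : SmGSet H) (hY : IsTransitive Y)
    (Z : SmGSet K) (f : dprod (Φ.obj X) (Ψ.obj Y) hK.roelcke ⟶ Z)
    (hf : Function.Surjective (SmHom.toFun f)) :
    ∃ (X' : SmGSet G) (p : X ⟶ X') (Y' : SmGSet H) (q : Y ⟶ Y'),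
      Function.Surjective (SmHom.toFun p) ∧ Function.Surjective (SmHom.toFun q) ∧
        Nonempty (Z ≅ dprod (Φ.obj X') (Ψ.obj Y') hK.roelcke) := by
  haveI := hΦ₁; haveI := hΦ₂; haveI := hΨ₁; haveI := hΨ₂
  classical
  obtain ⟨x0⟩ := hX.1
  obtain ⟨y0⟩ := hY.1
  have hXt := hX.2
  have hYt := hY.2
  -- notation
  let PA := piece Φ hG.roelcke X
  let QB := piece Ψ hH.roelcke Y
  let WA := ((Φ.obj X).α × (Ψ.obj Y).α)
  let E : WA × WA → Prop := fun t => f.toFun t.1 = f.toFun t.2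
  -- invariance of E
  have hEsmul : ∀ (k : K) (t : WA × WA), E t →
      E ((((Φ.obj X).smul k t.1.1, (Ψ.obj Y).smul k t.1.2)),
         (((Φ.obj X).smul k t.2.1, (Ψ.obj Y).smul k t.2.2))) := by
    intro k t ht
    have e1 : f.toFun (((Φ.obj X).smul k t.1.1, (Ψ.obj Y).smul k t.1.2))
        = Z.smul k (f.toFun t.1) := f.equivariant k t.1
    have e2 : f.toFun (((Φ.obj X).smul k t.2.1, (Ψ.obj Y).smul k t.2.2))
        = Z.smul k (f.toFun t.2) := f.equivariant k t.2
    show f.toFun _ = f.toFun _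
    rw [e1, e2, show f.toFun t.1 = f.toFun t.2 from ht]
  -- the set of orbit pairs contained in the kernel of f
  let S : oQt (dprod X X hG.roelcke) → oQt (dprod Y Y hH.roelcke) → Prop := fun i j =>
    ∃ t : WA × WA, ((t.1.1, t.2.1) ∈ PA i ∧ (t.1.2, t.2.2) ∈ QB j) ∧ E t
  -- each O_{ij} is a single K-orbit, so E propagates along it
  have hOtrans : ∀ (i : oQt (dprod X X hG.roelcke)) (j : oQt (dprod Y Y hH.roelcke))
      (t t' : WA × WA),
      (t.1.1, t.2.1) ∈ PA i → (t.1.2, t.2.2) ∈ QB j →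
      (t'.1.1, t'.2.1) ∈ PA i → (t'.1.2, t'.2.2) ∈ QB j →
      E t → E t' := by
    intro i j t t' ht1 ht2 ht1' ht2' hEt
    have hD : IsTransitive (dprod
        (Φ.obj (sub (dprod X X hG.roelcke) (cls (dprod X X hG.roelcke) i)
          (cls_inv (dprod X X hG.roelcke) i)))
        (Ψ.obj (sub (dprod Y Y hH.roelcke) (cls (dprod Y Y hH.roelcke) j)
          (cls_inv (dprod Y Y hH.roelcke) j))) hK.roelcke) :=
      htrans _ _ (clsObj_transitive _ i) (clsObj_transitive _ j)
    obtain ⟨m, hm⟩ := ht1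
    obtain ⟨n, hn⟩ := ht2
    obtain ⟨m', hm'⟩ := ht1'
    obtain ⟨n', hn'⟩ := ht2'
    obtain ⟨k, hk⟩ := hD.2 (m, n) (m', n')
    have hkm : (Φ.obj (sub (dprod X X hG.roelcke) (cls (dprod X X hG.roelcke) i)
        (cls_inv (dprod X X hG.roelcke) i))).smul k m = m' := congrArg Prod.fst hk
    have hkn : (Ψ.obj (sub (dprod Y Y hH.roelcke) (cls (dprod Y Y hH.roelcke) j)
        (cls_inv (dprod Y Y hH.roelcke) j))).smul k n = n' := congrArg Prod.snd hk
    have e11 : t'.1.1 = (Φ.obj X).smul k t.1.1 := by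
      rw [← pair_fst_eq hm, ← pair_fst_eq hm', ← hkm]
      exact (Φ.map _).equivariant k m
    have e21 : t'.2.1 = (Φ.obj X).smul k t.2.1 := by
      rw [← pair_snd_eq hm, ← pair_snd_eq hm', ← hkm]
      exact (Φ.map _).equivariant k m
    have e12 : t'.1.2 = (Ψ.obj Y).smul k t.1.2 := by
      rw [← pair_fst_eq hn, ← pair_fst_eq hn', ← hkn]
      exact (Ψ.map _).equivariant k n
    have e22 : t'.2.2 = (Ψ.obj Y).smul k t.2.2 := by
      rw [← pair_snd_eq hn, ← pair_snd_eq hn', ← hkn]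
      exact (Ψ.map _).equivariant k n
    have ht'eq : t' = ((((Φ.obj X).smul k t.1.1, (Ψ.obj Y).smul k t.1.2)),
         (((Φ.obj X).smul k t.2.1, (Ψ.obj Y).smul k t.2.2))) :=
      Prod.ext (Prod.ext e11 e12) (Prod.ext e21 e22)
    rw [ht'eq]
    exact hEsmul k t hEt
  -- the relation R on X × Y
  let R : (X.α × Y.α) → (X.α × Y.α) → Prop := fun u v =>
    S (idx (dprod X X hG.roelcke) (u.1, v.1)) (idx (dprod Y Y hH.roelcke) (u.2, v.2))
  have hRrefl : ∀ u, R u u := by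
    intro u
    obtain ⟨w0⟩ := (htrans X Y hX hY).1
    exact ⟨(w0, w0),
      ⟨(piece_diag Φ hG.roelcke X hK.roelcke hX u.1).1 w0.1,
       (piece_diag Ψ hH.roelcke Y hK.roelcke hY u.2).1 w0.2⟩, rfl⟩
  have hRsymm : ∀ u v, R u v → R v u := by
    rintro u v ⟨t, ⟨h1, h2⟩, hE⟩
    exact ⟨(t.2, t.1),
      ⟨piece_swap Φ hG.roelcke X u.1 v.1 h1, piece_swap Ψ hH.roelcke Y u.2 v.2 h2⟩,
      (show f.toFun t.1 = f.toFun t.2 from hE).symm⟩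
  have hRtrans : ∀ u v w, R u v → R v w → R u w := by
    intro u v w huv hvw
    have hD3 : IsTransitive (dprod
        (Φ.obj (sub (dprod (dprod X X hG.roelcke) X hG.roelcke)
          (cls (dprod (dprod X X hG.roelcke) X hG.roelcke)
            (idx (dprod (dprod X X hG.roelcke) X hG.roelcke) ((u.1, v.1), w.1)))
          (cls_inv _ _)))
        (Ψ.obj (sub (dprod (dprod Y Y hH.roelcke) Y hH.roelcke)
          (cls (dprod (dprod Y Y hH.roelcke) Y hH.roelcke)
            (idx (dprod (dprod Y Y hH.roelcke) Y hH.roelcke) ((u.2, v.2), w.2)))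
          (cls_inv _ _))) hK.roelcke) :=
      htrans _ _ (clsObj_transitive _ _) (clsObj_transitive _ _)
    obtain ⟨mn⟩ := hD3.1
    obtain ⟨p1, p2, p3, hp12, hp13, hp23⟩ :=
      piece_triple Φ hG.roelcke X u.1 v.1 w.1 mn.1
    obtain ⟨q1, q2, q3, hq12, hq13, hq23⟩ :=
      piece_triple Ψ hH.roelcke Y u.2 v.2 w.2 mn.2
    have hE12 : E ((p1, q1), (p2, q2)) := by
      obtain ⟨t, ⟨h1, h2⟩, hEt⟩ := huv
      exact hOtrans _ _ t ((p1, q1), (p2, q2)) h1 h2 hp12 hq12 hEt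
    have hE23 : E ((p2, q2), (p3, q3)) := by
      obtain ⟨t, ⟨h1, h2⟩, hEt⟩ := hvw
      exact hOtrans _ _ t ((p2, q2), (p3, q3)) h1 h2 hp23 hq23 hEt
    exact ⟨((p1, q1), (p3, q3)), ⟨hp13, hq13⟩,
      (show f.toFun (p1, q1) = f.toFun (p2, q2) from hE12).trans
      (show f.toFun (p2, q2) = f.toFun (p3, q3) from hE23)⟩
  -- R is invariant
  have hRinv : ∀ (gh : G × H) (u v : X.α × Y.α), R u v →
      R ((eprod X Y).smul gh u) ((eprod X Y).smul gh v) := by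
    intro gh u v huv
    have e1 : idx (dprod X X hG.roelcke) (X.smul gh.1 u.1, X.smul gh.1 v.1)
        = idx (dprod X X hG.roelcke) (u.1, v.1) :=
      idx_smul (dprod X X hG.roelcke) gh.1 (u.1, v.1)
    have e2 : idx (dprod Y Y hH.roelcke) (Y.smul gh.2 u.2, Y.smul gh.2 v.2)
        = idx (dprod Y Y hH.roelcke) (u.2, v.2) :=
      idx_smul (dprod Y Y hH.roelcke) gh.2 (u.2, v.2)
    show S (idx (dprod X X hG.roelcke) (X.smul gh.1 u.1, X.smul gh.1 v.1))
      (idx (dprod Y Y hH.roelcke) (Y.smul gh.2 u.2, Y.smul gh.2 v.2))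
    rw [e1, e2]
    exact huv
  -- quotient and splitting
  have heprodt : IsTransitive (eprod X Y) := by
    refine ⟨⟨(x0, y0)⟩, fun a b => ?_⟩
    obtain ⟨g, hg⟩ := hXt a.1 b.1
    obtain ⟨h, hh⟩ := hYt a.2 b.2
    exact ⟨(g, h), Prod.ext hg hh⟩
  have hW't : IsTransitive (quotObj (eprod X Y) R hRinv) :=
    quotObj_transitive (eprod X Y) R hRinv heprodt
  obtain ⟨X', Y', hX', hY', ⟨e⟩⟩ := hsplit H hH (quotObj (eprod X Y) R hRinv) hW't
  let κ : eprod X Y ⟶ eprod X' Y' := quotH (eprod X Y) R hRinv ≫ e.hom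
  have hκsurj : Function.Surjective κ.toFun := by
    intro t
    obtain ⟨a, ha⟩ := (iso_bijective e).2 t
    obtain ⟨u, hu⟩ := Quot.exists_rep a
    refine ⟨u, ?_⟩
    show e.hom.toFun (Quot.mk R u) = t
    exact (congrArg e.hom.toFun hu).trans ha
  have hRequiv : Equivalence R :=
    ⟨hRrefl, fun {a b} h => hRsymm a b h, fun {a b c} h h' => hRtrans a b c h h'⟩
  have hκker : ∀ u v, κ.toFun u = κ.toFun v ↔ R u v := by
    intro u v
    constructor
    · intro h
      have h2 : Quot.mk R u = Quot.mk R v := (iso_bijective e).1 h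
      exact hRequiv.eqvGen_iff.mp (Quot.eq.mp h2)
    · intro h
      show e.hom.toFun (Quot.mk R u) = e.hom.toFun (Quot.mk R v)
      exact congrArg e.hom.toFun (Quot.sound h)
  -- κ splits componentwise
  have hfirst : ∀ (x : X.α) (y y' : Y.α), (κ.toFun (x, y)).1 = (κ.toFun (x, y')).1 := by
    intro x y y'
    obtain ⟨h, hh⟩ := hYt y y'
    have e1 : κ.toFun (X.smul 1 x, Y.smul h y)
        = (eprod X' Y').smul ((1 : G), h) (κ.toFun (x, y)) :=
      κ.equivariant ((1 : G), h) (x, y)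
    have e2 : (x, y') = (X.smul 1 x, Y.smul h y) := Prod.ext (X.one_smul x).symm hh.symm
    rw [e2, e1]
    exact (X'.one_smul _).symm
  have hsecond : ∀ (y : Y.α) (x x' : X.α), (κ.toFun (x, y)).2 = (κ.toFun (x', y)).2 := by
    intro y x x'
    obtain ⟨g, hg⟩ := hXt x x'
    have e1 : κ.toFun (X.smul g x, Y.smul 1 y)
        = (eprod X' Y').smul (g, (1 : H)) (κ.toFun (x, y)) :=
      κ.equivariant (g, (1 : H)) (x, y)
    have e2 : (x', y) = (X.smul g x, Y.smul 1 y) := Prod.ext hg.symm (Y.one_smul y).symm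
    rw [e2, e1]
    exact (Y'.one_smul _).symm
  let p : X ⟶ X' :=
    ⟨fun x => (κ.toFun (x, y0)).1, by
      intro g x
      have e1 : κ.toFun (X.smul g x, Y.smul 1 y0)
          = (eprod X' Y').smul (g, (1 : H)) (κ.toFun (x, y0)) :=
        κ.equivariant (g, (1 : H)) (x, y0)
      have e2 : (κ.toFun (X.smul g x, y0)).1 = (κ.toFun (X.smul g x, Y.smul 1 y0)).1 :=
        hfirst (X.smul g x) y0 (Y.smul 1 y0)
      show (κ.toFun (X.smul g x, y0)).1 = X'.smul g ((κ.toFun (x, y0)).1)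
      rw [e2, e1]
      rfl⟩
  let q : Y ⟶ Y' :=
    ⟨fun y => (κ.toFun (x0, y)).2, by
      intro h y
      have e1 : κ.toFun (X.smul 1 x0, Y.smul h y)
          = (eprod X' Y').smul ((1 : G), h) (κ.toFun (x0, y)) :=
        κ.equivariant ((1 : G), h) (x0, y)
      have e2 : (κ.toFun (x0, Y.smul h y)).2 = (κ.toFun (X.smul 1 x0, Y.smul h y)).2 :=
        hsecond (Y.smul h y) x0 (X.smul 1 x0)
      show (κ.toFun (x0, Y.smul h y)).2 = Y'.smul h ((κ.toFun (x0, y)).2)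
      rw [e2, e1]
      rfl⟩
  have κ_eq : ∀ u : X.α × Y.α, κ.toFun u = (p.toFun u.1, q.toFun u.2) := fun u =>
    Prod.ext (hfirst u.1 u.2 y0) (hsecond u.2 u.1 x0)
  have hpsurj : Function.Surjective p.toFun := by
    intro x'
    obtain ⟨t0⟩ := hY'.1
    obtain ⟨u, hu⟩ := hκsurj (x', t0)
    exact ⟨u.1, (hfirst u.1 y0 u.2).trans (congrArg Prod.fst hu)⟩
  have hqsurj : Function.Surjective q.toFun := by
    intro y'
    obtain ⟨t0⟩ := hX'.1
    obtain ⟨u, hu⟩ := hκsurj (t0, y')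
    exact ⟨u.2, (hsecond u.2 x0 u.1).trans (congrArg Prod.snd hu)⟩
  have hRpq : ∀ u v : X.α × Y.α,
      R u v ↔ (p.toFun u.1 = p.toFun v.1 ∧ q.toFun u.2 = q.toFun v.2) := by
    intro u v
    rw [← hκker u v]
    constructor
    · intro h
      have h' := ((κ_eq u).symm.trans h).trans (κ_eq v)
      exact ⟨pair_fst_eq h', pair_snd_eq h'⟩
    · rintro ⟨h1, h2⟩
      rw [κ_eq u, κ_eq v]
      exact Prod.ext h1 h2
  -- bridge between S and componentwise equality
  have hS_imp : ∀ (i : oQt (dprod X X hG.roelcke)) (j : oQt (dprod Y Y hH.roelcke)),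
      S i j →
      (∀ z1 z2 : X.α, idx (dprod X X hG.roelcke) (z1, z2) = i → p.toFun z1 = p.toFun z2) ∧
      (∀ w1 w2 : Y.α, idx (dprod Y Y hH.roelcke) (w1, w2) = j → q.toFun w1 = q.toFun w2) := by
    intro i j hij
    constructor
    · intro z1 z2 hz
      obtain ⟨⟨w1, w2⟩, hw⟩ := Quot.exists_rep j
      have hw' : idx (dprod Y Y hH.roelcke) (w1, w2) = j := hw
      have hR : R (z1, w1) (z2, w2) := by
        show S (idx (dprod X X hG.roelcke) (z1, z2)) (idx (dprod Y Y hH.roelcke) (w1, w2))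
        rw [hz, hw']
        exact hij
      exact ((hRpq _ _).mp hR).1
    · intro w1 w2 hw
      obtain ⟨⟨z1, z2⟩, hz⟩ := Quot.exists_rep i
      have hz' : idx (dprod X X hG.roelcke) (z1, z2) = i := hz
      have hR : R (z1, w1) (z2, w2) := by
        show S (idx (dprod X X hG.roelcke) (z1, z2)) (idx (dprod Y Y hH.roelcke) (w1, w2))
        rw [hz', hw]
        exact hij
      exact ((hRpq _ _).mp hR).2
  have hS_rev : ∀ (i : oQt (dprod X X hG.roelcke)) (j : oQt (dprod Y Y hH.roelcke))
      (z1 z2 : X.α) (w1 w2 : Y.α), idx (dprod X X hG.roelcke) (z1, z2) = i →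
      idx (dprod Y Y hH.roelcke) (w1, w2) = j →
      p.toFun z1 = p.toFun z2 → q.toFun w1 = q.toFun w2 → S i j := by
    intro i j z1 z2 w1 w2 hz hw hp hq
    have hR : R (z1, w1) (z2, w2) := (hRpq _ _).mpr ⟨hp, hq⟩
    have hR' : S (idx (dprod X X hG.roelcke) (z1, z2))
        (idx (dprod Y Y hH.roelcke) (w1, w2)) := hR
    rwa [hz, hw] at hR'
  -- the comparison morphism F
  let F : dprod (Φ.obj X) (Ψ.obj Y) hK.roelcke ⟶ dprod (Φ.obj X') (Ψ.obj Y') hK.roelcke :=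
    ⟨fun ab => ((Φ.map p).toFun ab.1, (Ψ.map q).toFun ab.2),
     fun k ab => Prod.ext ((Φ.map p).equivariant k ab.1) ((Ψ.map q).equivariant k ab.2)⟩
  have hEF : ∀ t : WA × WA, E t → F.toFun t.1 = F.toFun t.2 := by
    intro t hEt
    obtain ⟨i, hi⟩ := piece_complete Φ hG.roelcke X hK.roelcke (t.1.1, t.2.1)
    obtain ⟨j, hj⟩ := piece_complete Ψ hH.roelcke Y hK.roelcke (t.1.2, t.2.2)
    have hSij : S i j := ⟨t, ⟨hi, hj⟩, hEt⟩
    obtain ⟨hp, hq⟩ := hS_imp i j hSij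
    exact Prod.ext
      (piece_map_eq Φ hG.roelcke X p i (fun z hz => hp z.1 z.2 hz) hi)
      (piece_map_eq Ψ hH.roelcke Y q j (fun z hz => hq z.1 z.2 hz) hj)
  have hFE : ∀ t : WA × WA, F.toFun t.1 = F.toFun t.2 → E t := by
    intro t hFt
    obtain ⟨i, hi⟩ := piece_complete Φ hG.roelcke X hK.roelcke (t.1.1, t.2.1)
    obtain ⟨j, hj⟩ := piece_complete Ψ hH.roelcke Y hK.roelcke (t.1.2, t.2.2)
    obtain ⟨⟨z1, z2⟩, hz⟩ := Quot.exists_rep i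
    obtain ⟨⟨w1, w2⟩, hw⟩ := Quot.exists_rep j
    have hz' : idx (dprod X X hG.roelcke) (z1, z2) = i := hz
    have hw' : idx (dprod Y Y hH.roelcke) (w1, w2) = j := hw
    by_cases hc1 : p.toFun z1 = p.toFun z2
    · by_cases hc2 : q.toFun w1 = q.toFun w2
      · have hSij : S i j := hS_rev i j z1 z2 w1 w2 hz' hw' hc1 hc2
        obtain ⟨t', ⟨hi', hj'⟩, hEt'⟩ := hSij
        exact hOtrans i j t' t hi' hj' hi hj hEt'
      · exact absurd (congrArg Prod.snd hFt)
          (piece_map_ne Ψ hH.roelcke Y hK.roelcke q j (w1, w2) hw' hc2 hj)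
    · exact absurd (congrArg Prod.fst hFt)
        (piece_map_ne Φ hG.roelcke X hK.roelcke p i (z1, z2) hz' hc1 hi)
  have hFsurj : Function.Surjective F.toFun := by
    have hV := htrans X' Y' hX' hY'
    obtain ⟨w0⟩ := (htrans X Y hX hY).1
    intro v
    obtain ⟨k, hk⟩ := hV.2 (F.toFun w0) v
    refine ⟨(dprod (Φ.obj X) (Ψ.obj Y) hK.roelcke).smul k w0, ?_⟩
    rw [F.equivariant]
    exact hk
  -- the induced map from Z
  let θfun : Z.α → (dprod (Φ.obj X') (Ψ.obj Y') hK.roelcke).α :=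
    fun z => F.toFun (hf z).choose
  have hθ : ∀ w : (dprod (Φ.obj X) (Ψ.obj Y) hK.roelcke).α,
      θfun (f.toFun w) = F.toFun w := by
    intro w
    exact hEF ((hf (f.toFun w)).choose, w) (hf (f.toFun w)).choose_spec
  have θequi : ∀ (k : K) (z : Z.α),
      θfun (Z.smul k z) = (dprod (Φ.obj X') (Ψ.obj Y') hK.roelcke).smul k (θfun z) := by
    intro k z
    obtain ⟨w, rfl⟩ := hf z
    rw [show Z.smul k (f.toFun w)
        = f.toFun ((dprod (Φ.obj X) (Ψ.obj Y) hK.roelcke).smul k w)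
      from (f.equivariant k w).symm, hθ, hθ, F.equivariant]
  have θinj : ∀ z z', θfun z = θfun z' → z = z' := by
    intro z z' h
    obtain ⟨w, rfl⟩ := hf z
    obtain ⟨w', rfl⟩ := hf z'
    rw [hθ, hθ] at h
    exact hFE (w, w') h
  have θsurj : Function.Surjective θfun := by
    intro v
    obtain ⟨w, hw⟩ := hFsurj v
    exact ⟨f.toFun w, (hθ w).trans hw⟩
  exact ⟨X', p, Y', q, hpsurj, hqsurj,
    ⟨isoOfBij ⟨θfun, θequi⟩ ⟨fun a b h => θinj a b h, θsurj⟩⟩⟩
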